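/- arXiv:0909.2761 — 2 statements merged into one kernel-verified Lean document; each statement's English description precedes it below -/
import Mathlib

section
/- For every element w of the Weyl group W(E₈), the inner product ⟨û₂, w(û₂)⟩ lies in the set {1, 3/4, 1/2, 1/4, 0, −1/4, −1/2, −3/4, −1}. (Equivalently: the distance on the unit sphere between two vertices of type 2 of the Coxeter complex of type E₈ is one of 0, arccos(3/4), π/3, arccos(1/4), π/2, arccos(−1/4), 2π/3, arccos(−3/4), π.) -/
noncomputable section

open scoped RealInnerProductSpace

/-- Euclidean space `ℝ⁸`. -/
abbrev E8Space := EuclideanSpace ℝ (Fin 8)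

/-- The fundamental root vectors of the root system of type `E₈`:
`r₁ = ½(1,1,1,−1,−1,−1,−1,−1)` and `rᵢ = eᵢ − eᵢ₋₁` for `2 ≤ i ≤ 8`
(here indexed by `Fin 8`, so `j = 0` corresponds to `r₁`). -/
def E8root : Fin 8 → E8Space := fun j =>
  if j = 0 then WithLp.toLp 2 (fun i => if (i : ℕ) < 3 then (1 : ℝ) / 2 else -(1 / 2))
  else WithLp.toLp 2 (fun i => if i = j then (1 : ℝ) else if (i : ℕ) + 1 = (j : ℕ) then -1 else 0)

/-- The Weyl group `W(E₈)`: the subgroup of linear isometries of `ℝ⁸` generated by the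
reflections `s_r(x) = x − 2(⟨x,r⟩/⟨r,r⟩)r` in the fundamental root vectors. -/
def WeylE8 : Subgroup (E8Space ≃ₗᵢ[ℝ] E8Space) :=
  Subgroup.closure
    { f | ∃ j : Fin 8, ∀ x : E8Space,
        f x = x - ((2 * ⟪x, E8root j⟫ / ⟪E8root j, E8root j⟫) • E8root j) }

/-- `û₂ = ¼(−3,−1,−1,−1,−1,−1,−1,−1)`, a unit vector representing a vertex of type 2. -/
def u2hat : E8Space := WithLp.toLp 2 (fun i => (if (i : ℕ) = 0 then -3 else -1) / 4)

namespace E8aux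

/-- Integer Gram matrix of the fundamental roots. -/
def gramZ : Fin 8 → Fin 8 → ℤ := fun j k =>
  if j = k then 2
  else if (j = 0 ∧ k = 3) ∨ (j = 3 ∧ k = 0) then -1
  else if j ≠ 0 ∧ k ≠ 0 ∧ ((j:ℕ) = (k:ℕ) + 1 ∨ (k:ℕ) = (j:ℕ) + 1) then -1
  else 0

lemma v0 : ((0:Fin 8):ℕ) = 0 := rfl
lemma v1 : ((1:Fin 8):ℕ) = 1 := rfl
lemma v2 : ((2:Fin 8):ℕ) = 2 := rfl
lemma v3 : ((3:Fin 8):ℕ) = 3 := rfl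
lemma v4 : ((4:Fin 8):ℕ) = 4 := rfl
lemma v5 : ((5:Fin 8):ℕ) = 5 := rfl
lemma v6 : ((6:Fin 8):ℕ) = 6 := rfl
lemma v7 : ((7:Fin 8):ℕ) = 7 := rfl

set_option maxHeartbeats 1000000 in
lemma gram_eq : ∀ j k : Fin 8, ⟪E8root j, E8root k⟫ = ((gramZ j k : ℤ) : ℝ) := by
  intro j k
  fin_cases j <;> fin_cases k <;>
    simp only [PiLp.inner_apply, RCLike.inner_apply, Fin.sum_univ_eight, E8root, u2hat, PiLp.toLp_apply, Fin.reduceFinMk, Fin.zero_eta, Fin.mk_one, Fin.isValue, Fin.reduceEq, ↓reduceIte] <;>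
    norm_num [PiLp.inner_apply, RCLike.inner_apply, Fin.sum_univ_eight, E8root, gramZ,
      Fin.ext_iff, PiLp.toLp_apply, v0, v1, v2, v3, v4, v5, v6, v7]

lemma root_norm (j : Fin 8) : ⟪E8root j, E8root j⟫ = (2 : ℝ) := by
  rw [gram_eq]; simp [gramZ]

/-- ⟪û₂, rⱼ⟫ : 0 for all j except j = 1 where it is ½. -/
def cZ : Fin 8 → ℤ := fun j => if j = 1 then 1 else 0

set_option maxHeartbeats 1000000 in
lemma u2_inner_root : ∀ j : Fin 8, ⟪u2hat, E8root j⟫ = ((cZ j : ℤ) : ℝ) / 2 := by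
  intro j
  fin_cases j <;>
    simp only [PiLp.inner_apply, RCLike.inner_apply, Fin.sum_univ_eight, E8root, u2hat, PiLp.toLp_apply, Fin.reduceFinMk, Fin.zero_eta, Fin.mk_one, Fin.isValue, Fin.reduceEq, ↓reduceIte] <;>
    norm_num [PiLp.inner_apply, RCLike.inner_apply, Fin.sum_univ_eight, E8root, u2hat, cZ,
      Fin.ext_iff, PiLp.toLp_apply, v0, v1, v2, v3, v4, v5, v6, v7]

lemma u2_norm_sq : ⟪u2hat, u2hat⟫ = (1 : ℝ) := by
  simp only [PiLp.inner_apply, RCLike.inner_apply, Fin.sum_univ_eight, u2hat]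
  norm_num [PiLp.inner_apply, RCLike.inner_apply, Fin.sum_univ_eight, u2hat, PiLp.toLp_apply,
    v0, v1, v2, v3, v4, v5, v6, v7]

/-- The root lattice, as an additive subgroup of `ℝ⁸`. -/
def L : AddSubgroup E8Space := AddSubgroup.closure (Set.range E8root)

lemma root_mem (j : Fin 8) : E8root j ∈ L := AddSubgroup.subset_closure ⟨j, rfl⟩

lemma int_inner (x : E8Space) (hx : x ∈ L) (k : Fin 8) :
    ∃ n : ℤ, ⟪x, E8root k⟫ = (n : ℝ) := by
  induction hx using AddSubgroup.closure_induction with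
  | mem y hy => obtain ⟨j, rfl⟩ := hy; exact ⟨gramZ j k, gram_eq j k⟩
  | zero => exact ⟨0, by simp⟩
  | add a b _ _ ha hb =>
      obtain ⟨n, hn⟩ := ha; obtain ⟨m, hm⟩ := hb
      exact ⟨n + m, by rw [inner_add_left, hn, hm]; push_cast; ring⟩
  | neg a _ ha =>
      obtain ⟨n, hn⟩ := ha
      exact ⟨-n, by rw [inner_neg_left, hn]; push_cast; ring⟩

lemma half_inner (x : E8Space) (hx : x ∈ L) :
    ∃ n : ℤ, ⟪u2hat, x⟫ = (n : ℝ) / 2 := by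
  induction hx using AddSubgroup.closure_induction with
  | mem y hy => obtain ⟨j, rfl⟩ := hy; exact ⟨cZ j, u2_inner_root j⟩
  | zero => exact ⟨0, by simp⟩
  | add a b _ _ ha hb =>
      obtain ⟨n, hn⟩ := ha; obtain ⟨m, hm⟩ := hb
      exact ⟨n + m, by rw [inner_add_right, hn, hm]; push_cast; ring⟩
  | neg a _ ha =>
      obtain ⟨n, hn⟩ := ha
      exact ⟨-n, by rw [inner_neg_right, hn]; push_cast; ring⟩

set_option maxHeartbeats 1000000 in
lemma two_u2_eq :
    (2 : ℝ) • u2hat =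
      (5 : ℝ) • E8root 0 + (4 : ℝ) • E8root 1 + (7 : ℝ) • E8root 2 + (10 : ℝ) • E8root 3 +
      (8 : ℝ) • E8root 4 + (6 : ℝ) • E8root 5 + (4 : ℝ) • E8root 6 + (2 : ℝ) • E8root 7 := by
  ext i
  simp only [PiLp.add_apply, PiLp.smul_apply, smul_eq_mul]
  fin_cases i <;>
    simp only [E8root, u2hat, PiLp.toLp_apply, Fin.reduceFinMk, Fin.zero_eta, Fin.mk_one, Fin.isValue, Fin.reduceEq, ↓reduceIte] <;>
    norm_num [E8root, u2hat, Fin.ext_iff, PiLp.toLp_apply, v0, v1, v2, v3, v4, v5, v6, v7]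

lemma two_u2_mem : (2 : ℝ) • u2hat ∈ L := by
  rw [two_u2_eq]
  have h : ∀ (c : ℤ) (j : Fin 8), ((c : ℝ)) • E8root j ∈ L := fun c j => by
    rw [Int.cast_smul_eq_zsmul]; exact AddSubgroup.zsmul_mem L (root_mem j) c
  refine AddSubgroup.add_mem L (AddSubgroup.add_mem L (AddSubgroup.add_mem L
    (AddSubgroup.add_mem L (AddSubgroup.add_mem L (AddSubgroup.add_mem L
    (AddSubgroup.add_mem L ?_ ?_) ?_) ?_) ?_) ?_) ?_) ?_
  · exact_mod_cast h 5 0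
  · exact_mod_cast h 4 1
  · exact_mod_cast h 7 2
  · exact_mod_cast h 10 3
  · exact_mod_cast h 8 4
  · exact_mod_cast h 6 5
  · exact_mod_cast h 4 6
  · exact_mod_cast h 2 7

section reflection

variable {f : E8Space ≃ₗᵢ[ℝ] E8Space} {j : Fin 8}

lemma refl_formula (hf : ∀ x : E8Space,
    f x = x - ((2 * ⟪x, E8root j⟫ / ⟪E8root j, E8root j⟫) • E8root j)) (x : E8Space) :
    f x = x - ⟪x, E8root j⟫ • E8root j := by
  rw [hf x, root_norm j]
  congr 2
  field_simp

lemma refl_invol (hf : ∀ x : E8Space,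
    f x = x - ((2 * ⟪x, E8root j⟫ / ⟪E8root j, E8root j⟫) • E8root j)) (x : E8Space) :
    f (f x) = x := by
  rw [refl_formula hf, refl_formula hf]
  have h1 : ⟪x - ⟪x, E8root j⟫ • E8root j, E8root j⟫ = -⟪x, E8root j⟫ := by
    rw [inner_sub_left, real_inner_smul_left, root_norm j]; ring
  rw [h1]
  module

lemma refl_maps (hf : ∀ x : E8Space,
    f x = x - ((2 * ⟪x, E8root j⟫ / ⟪E8root j, E8root j⟫) • E8root j))
    {x : E8Space} (hx : x ∈ L) : f x ∈ L := by
  rw [refl_formula hf]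
  obtain ⟨n, hn⟩ := int_inner x hx j
  rw [hn, Int.cast_smul_eq_zsmul]
  exact AddSubgroup.sub_mem L hx (AddSubgroup.zsmul_mem L (root_mem j) n)

end reflection

lemma weyl_maps (w : E8Space ≃ₗᵢ[ℝ] E8Space) (hw : w ∈ WeylE8) :
    ∀ x : E8Space, x ∈ L ↔ w x ∈ L := by
  induction hw using Subgroup.closure_induction with
  | mem f hfS =>
      obtain ⟨j, hf⟩ := hfS
      intro x
      constructor
      · exact fun hx => refl_maps hf hx
      · intro hx
        have := refl_maps hf hx
        rwa [refl_invol hf x] at this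
  | one => intro x; simp
  | mul a b _ _ ha hb =>
      intro x
      rw [hb x, ha (b x)]
      rfl
  | inv a _ ha =>
      intro x
      constructor
      · intro hx
        have h := (ha (a⁻¹ x)).2
        apply h
        have : a (a⁻¹ x) = x := by
          simp [LinearIsometryEquiv.apply_symm_apply]
        rwa [this]
      · intro hx
        have h := (ha (a⁻¹ x)).1 hx
        have : a (a⁻¹ x) = x := by
          simp [LinearIsometryEquiv.apply_symm_apply]
        rwa [this] at h

lemma u2_norm : ‖u2hat‖ = 1 := by
  have h : ‖u2hat‖ * ‖u2hat‖ = 1 := by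
    rw [← real_inner_self_eq_norm_mul_norm, u2_norm_sq]
  nlinarith [norm_nonneg u2hat]

set_option maxHeartbeats 1000000 in
lemma quarter_mem (n : ℤ) (h1 : -4 ≤ n) (h2 : n ≤ 4) :
    ((n : ℝ)) / 4 ∈ ({1, 3/4, 1/2, 1/4, 0, -1/4, -1/2, -3/4, -1} : Set ℝ) := by
  simp only [Set.mem_insert_iff, Set.mem_singleton_iff]
  interval_cases n <;> norm_num

end E8aux

theorem inner_u2hat_orbit (w : E8Space ≃ₗᵢ[ℝ] E8Space) (hw : w ∈ WeylE8) :
    ⟪u2hat, w u2hat⟫ ∈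
      ({1, 3/4, 1/2, 1/4, 0, -1/4, -1/2, -3/4, -1} : Set ℝ) := by
  classical
  have hmem : (2 : ℝ) • (w u2hat) ∈ E8aux.L := by
    have h1 : w ((2 : ℝ) • u2hat) = (2 : ℝ) • (w u2hat) := by
      simp [map_smul]
    have := (E8aux.weyl_maps w hw ((2 : ℝ) • u2hat)).1 E8aux.two_u2_mem
    rwa [h1] at this
  obtain ⟨n, hn⟩ := E8aux.half_inner _ hmem
  have hval : ⟪u2hat, w u2hat⟫ = (n : ℝ) / 4 := by
    rw [real_inner_smul_right] at hn
    linarith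
  have hw1 : ‖w u2hat‖ = 1 := by
    rw [LinearIsometryEquiv.norm_map, E8aux.u2_norm]
  have hcs : |⟪u2hat, w u2hat⟫| ≤ 1 := by
    calc |⟪u2hat, w u2hat⟫| ≤ ‖u2hat‖ * ‖w u2hat‖ := abs_real_inner_le_norm _ _
    _ = 1 := by rw [E8aux.u2_norm, hw1]; ring
  rw [hval] at hcs ⊢
  have hb : |(n : ℝ)| ≤ 4 := by
    rw [abs_le] at hcs ⊢
    constructor <;> linarith [hcs.1, hcs.2]
  have h1 : (-4 : ℤ) ≤ n := by
    rw [abs_le] at hb; exact_mod_cast hb.1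
  have h2 : n ≤ 4 := by
    rw [abs_le] at hb; exact_mod_cast hb.2
  exact E8aux.quarter_mem n h1 h2
end
end

section
/- For every element w of the Weyl group W(E₈), if ⟨û₇, w(û₈)⟩ < 0 then ⟨û₇, w(û₈)⟩ lies in the set {−√3/2, −1/√3, −1/(2√3)}. (Equivalently: the distances strictly greater than π/2 between a vertex of type 7 and a vertex of type 8 of the Coxeter complex of type E₈ are exactly among 5π/6, arccos(−1/√3), arccos(−1/(2√3)).) -/
noncomputable section

open scoped RealInnerProductSpace

/-- `û₇ = (−1,−1,−1,−1,−1,−1,0,0)/√6`, a unit vector representing a vertex of type 7. -/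
def u7hat : E8Space := WithLp.toLp 2 (fun i => (if (i : ℕ) < 6 then -1 else 0) / Real.sqrt 6)

/-- `û₈ = (−1,−1,−1,−1,−1,−1,−1,1)/(2√2)`, a unit vector representing a vertex of type 8. -/
def u8hat : E8Space := WithLp.toLp 2 (fun i => (if (i : ℕ) = 7 then 1 else -1) / (2 * Real.sqrt 2))


/-! ### Auxiliary lemmas -/

lemma E8inner_sum (v r : E8Space) : ⟪v, r⟫ = ∑ i, v i * r i := by
  simp [PiLp.inner_apply, RCLike.inner_apply]
  exact Finset.sum_congr rfl (fun i _ => mul_comm _ _)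

lemma fv0 : ((0:Fin 8):ℕ) = 0 := rfl
lemma fv1 : ((1:Fin 8):ℕ) = 1 := rfl
lemma fv2 : ((2:Fin 8):ℕ) = 2 := rfl
lemma fv3 : ((3:Fin 8):ℕ) = 3 := rfl
lemma fv4 : ((4:Fin 8):ℕ) = 4 := rfl
lemma fv5 : ((5:Fin 8):ℕ) = 5 := rfl
lemma fv6 : ((6:Fin 8):ℕ) = 6 := rfl
lemma fv7 : ((7:Fin 8):ℕ) = 7 := rfl

lemma sqrt2_sq : Real.sqrt 2 * Real.sqrt 2 = 2 := Real.mul_self_sqrt (by norm_num)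
lemma sqrt3_sq : Real.sqrt 3 * Real.sqrt 3 = 3 := Real.mul_self_sqrt (by norm_num)

/-- `v` is `1/√2` times a root of (an odd-coordinate-sum model of) the `E₈` lattice. -/
def E8cond (v : E8Space) : Prop :=
  ∃ x : Fin 8 → ℤ, (∀ i, 2 * Real.sqrt 2 * v i = (x i : ℝ)) ∧
    (∀ i, x i % 2 = x 0 % 2) ∧ (∑ i, x i) % 4 = (2 * x 0) % 4

lemma E8root_self_inner (j : Fin 8) : ⟪E8root j, E8root j⟫ = (2 : ℝ) := by
  rw [E8inner_sum]
  fin_cases j <;>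
    simp (config := { decide := true }) [E8root, Fin.sum_univ_eight] <;> norm_num

lemma refl_invol (f : E8Space ≃ₗᵢ[ℝ] E8Space) (j : Fin 8)
    (hf : ∀ x : E8Space,
      f x = x - ((2 * ⟪x, E8root j⟫ / ⟪E8root j, E8root j⟫) • E8root j)) :
    ∀ x : E8Space, f (f x) = x := by
  intro x
  set r := E8root j
  have hrr : ⟪r, r⟫ = (2 : ℝ) := E8root_self_inner j
  have h1 : ⟪x - ((2 * ⟪x, r⟫ / ⟪r, r⟫) • r), r⟫ = -⟪x, r⟫ := by
    rw [inner_sub_left, real_inner_smul_left, hrr]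
    ring
  rw [hf, hf x, h1, hrr]
  rw [show (2 * -⟪x,r⟫ / 2) = -(2 * ⟪x,r⟫ / 2) by ring]
  simp [neg_smul, sub_neg_eq_add, sub_add_cancel]

lemma swap_step (f : E8Space ≃ₗᵢ[ℝ] E8Space) (a b : Fin 8) (hab : (a : ℕ) + 1 = (b : ℕ))
    (hf : ∀ y : E8Space,
      f y = y - ((2 * ⟪y, E8root b⟫ / ⟪E8root b, E8root b⟫) • E8root b))
    (v : E8Space) (hv : E8cond v) : E8cond (f v) := by
  obtain ⟨x, hx, hpar, hsum⟩ := hv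
  have hb0 : b ≠ 0 := by
    intro h; subst h; simp at hab
  have hne : a ≠ b := by
    intro h; subst h; omega
  have hroot : ∀ i, E8root b i = (if i = b then (1:ℝ) else 0) - (if i = a then 1 else 0) := by
    intro i
    have hia : ((i : ℕ) + 1 = (b : ℕ)) ↔ i = a := by
      rw [Fin.ext_iff]; omega
    simp only [E8root, if_neg hb0]
    rcases eq_or_ne i b with h | h
    · subst h; rw [if_pos rfl, if_pos rfl, if_neg hne.symm]; norm_num
    · rw [if_neg h, if_neg h]
      rcases eq_or_ne i a with h2 | h2
      · subst h2; rw [if_pos (hia.mpr rfl), if_pos rfl]; norm_num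
      · rw [if_neg (fun hh => h2 (hia.mp hh)), if_neg h2]; norm_num
  have hinner : ∀ u : E8Space, ⟪u, E8root b⟫ = u b - u a := by
    intro u
    rw [E8inner_sum]
    simp only [hroot, mul_sub, mul_ite, mul_one, mul_zero, Finset.sum_sub_distrib,
      Finset.sum_ite_eq', Finset.mem_univ, if_pos]
  have hrr : ⟪E8root b, E8root b⟫ = (2:ℝ) := E8root_self_inner b
  have hfv : ∀ i, f v i = v i - (v b - v a) * E8root b i := by
    intro i
    rw [hf]
    simp only [PiLp.sub_apply, PiLp.smul_apply, smul_eq_mul, hrr, hinner]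
    ring
  refine ⟨x ∘ Equiv.swap a b, ?_, ?_, ?_⟩
  · intro i
    rw [hfv i, hroot i]
    simp only [Function.comp_apply, Equiv.swap_apply_def]
    rcases eq_or_ne i a with h | h
    · subst h
      rw [if_pos rfl, if_neg hne, if_pos rfl]
      linear_combination hx b
    · rcases eq_or_ne i b with h2 | h2
      · subst h2
        rw [if_neg hne.symm, if_pos rfl, if_pos rfl, if_neg hne.symm]
        linear_combination hx a
      · rw [if_neg h, if_neg h2, if_neg h2, if_neg h]
        linear_combination hx i
  · intro i
    simp only [Function.comp_apply]
    rw [hpar (Equiv.swap a b i), hpar (Equiv.swap a b 0)]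
  · have hsum' : ∑ i, (x ∘ Equiv.swap a b) i = ∑ i, x i := Equiv.sum_comp (Equiv.swap a b) x
    rw [hsum']
    have h0 : (x ∘ Equiv.swap a b) 0 % 2 = x 0 % 2 := hpar (Equiv.swap a b 0)
    simp only [Function.comp_apply] at h0 ⊢
    omega

lemma zero_step (f : E8Space ≃ₗᵢ[ℝ] E8Space)
    (hf : ∀ y : E8Space,
      f y = y - ((2 * ⟪y, E8root 0⟫ / ⟪E8root 0, E8root 0⟫) • E8root 0))
    (v : E8Space) (hv : E8cond v) : E8cond (f v) := by
  obtain ⟨x, hx, hpar, hsum⟩ := hv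
  rw [Fin.sum_univ_eight] at hsum
  have hp1 := hpar 1; have hp2 := hpar 2; have hp3 := hpar 3; have hp4 := hpar 4
  have hp5 := hpar 5; have hp6 := hpar 6; have hp7 := hpar 7
  obtain ⟨k, hk⟩ : ∃ k, x 0 + x 1 + x 2 - x 3 - x 4 - x 5 - x 6 - x 7 = 4 * k := by
    refine ⟨(x 0 + x 1 + x 2 - x 3 - x 4 - x 5 - x 6 - x 7) / 4, ?_⟩
    omega
  have hrr : ⟪E8root 0, E8root 0⟫ = (2:ℝ) := E8root_self_inner 0
  have hkR : ((x 0 : ℝ) + x 1 + x 2 - x 3 - x 4 - x 5 - x 6 - x 7) = 4 * (k : ℝ) := by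
    exact_mod_cast congrArg (fun n : ℤ => (n : ℝ)) hk
  have hr0 : ∀ i : Fin 8, E8root 0 i = if (i : ℕ) < 3 then (1:ℝ)/2 else -(1/2) := by
    intro i; simp [E8root]
  have hin : Real.sqrt 2 * ⟪v, E8root 0⟫ = (k : ℝ) := by
    rw [E8inner_sum, Fin.sum_univ_eight]
    simp only [hr0, fv0, fv1, fv2, fv3, fv4, fv5, fv6, fv7]
    norm_num
    linear_combination (hx 0 + hx 1 + hx 2 - hx 3 - hx 4 - hx 5 - hx 6 - hx 7) / 4 + hkR / 4
  refine ⟨fun i => if (i : ℕ) < 3 then x i - k else x i + k, ?_, ?_, ?_⟩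
  · intro i
    rw [hf]
    simp only [PiLp.sub_apply, PiLp.smul_apply, smul_eq_mul, hrr, hr0 i]
    by_cases h : (i : ℕ) < 3
    · rw [if_pos h, if_pos h]; push_cast; linear_combination hx i - hin
    · rw [if_neg h, if_neg h]; push_cast; linear_combination hx i + hin
  · intro i
    have hpi := hpar i
    show (if (i : ℕ) < 3 then x i - k else x i + k) % 2
        = (if ((0 : Fin 8) : ℕ) < 3 then x 0 - k else x 0 + k) % 2
    rw [fv0]
    norm_num
    split_ifs <;> omega
  · rw [Fin.sum_univ_eight]
    show ((if ((0:Fin 8):ℕ) < 3 then x 0 - k else x 0 + k) + (if ((1:Fin 8):ℕ) < 3 then x 1 - k else x 1 + k) + (if ((2:Fin 8):ℕ) < 3 then x 2 - k else x 2 + k) + (if ((3:Fin 8):ℕ) < 3 then x 3 - k else x 3 + k) + (if ((4:Fin 8):ℕ) < 3 then x 4 - k else x 4 + k) + (if ((5:Fin 8):ℕ) < 3 then x 5 - k else x 5 + k) + (if ((6:Fin 8):ℕ) < 3 then x 6 - k else x 6 + k) + (if ((7:Fin 8):ℕ) < 3 then x 7 - k else x 7 + k)) % 4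
      = (2 * (if ((0:Fin 8):ℕ) < 3 then x 0 - k else x 0 + k)) % 4
    rw [fv0, fv1, fv2, fv3, fv4, fv5, fv6, fv7]
    norm_num
    omega

lemma gen_step (f : E8Space ≃ₗᵢ[ℝ] E8Space) (j : Fin 8)
    (hf : ∀ y : E8Space,
      f y = y - ((2 * ⟪y, E8root j⟫ / ⟪E8root j, E8root j⟫) • E8root j))
    (v : E8Space) (hv : E8cond v) : E8cond (f v) := by
  fin_cases j
  · exact zero_step f hf v hv
  · exact swap_step f 0 1 (by decide) hf v hv
  · exact swap_step f 1 2 (by decide) hf v hv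
  · exact swap_step f 2 3 (by decide) hf v hv
  · exact swap_step f 3 4 (by decide) hf v hv
  · exact swap_step f 4 5 (by decide) hf v hv
  · exact swap_step f 5 6 (by decide) hf v hv
  · exact swap_step f 6 7 (by decide) hf v hv

lemma weyl_pres (w : E8Space ≃ₗᵢ[ℝ] E8Space) (hw : w ∈ WeylE8)
    (v : E8Space) (hv : E8cond v) : E8cond (w v) := by
  have H : ∀ u : E8Space, E8cond u → E8cond (w u) ∧ E8cond (w⁻¹ u) := by
    refine Subgroup.closure_induction
      (p := fun g _ => ∀ u : E8Space, E8cond u → E8cond (g u) ∧ E8cond (g⁻¹ u))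
      ?_ ?_ ?_ ?_ hw
    · rintro g ⟨j, hfj⟩ u hu
      have hinv : ∀ y : E8Space, g⁻¹ y = g y := by
        intro y
        have hgg := refl_invol g j hfj
        conv_lhs => rw [← hgg y]
        simp only [LinearIsometryEquiv.coe_inv]
        exact g.symm_apply_apply (g y)
      exact ⟨gen_step g j hfj u hu, by rw [hinv]; exact gen_step g j hfj u hu⟩
    · intro u hu
      constructor <;> · simp only [inv_one, LinearIsometryEquiv.coe_one, id_eq]; exact hu
    · intro g₁ g₂ _ _ h₁ h₂ u hu
      constructor
      · show E8cond ((g₁ * g₂) u)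
        rw [LinearIsometryEquiv.coe_mul]
        exact (h₁ _ ((h₂ u hu).1)).1
      · rw [mul_inv_rev, LinearIsometryEquiv.coe_mul]
        exact (h₂ _ ((h₁ u hu).2)).2
    · intro g _ h u hu
      exact ⟨(h u hu).2, by rw [inv_inv]; exact (h u hu).1⟩
  exact (H v hv).1

lemma u8hat_cond : E8cond u8hat := by
  refine ⟨fun i => if (i : ℕ) = 7 then 1 else -1, ?_, ?_, ?_⟩
  · intro i
    show 2 * Real.sqrt 2 * ((if (i : ℕ) = 7 then (1:ℝ) else -1) / (2 * Real.sqrt 2)) = _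
    rw [mul_div_cancel₀ _ (by positivity : (2 * Real.sqrt 2) ≠ 0)]
    by_cases h : (i:ℕ) = 7 <;> simp [h]
  · intro i
    show (if (i : ℕ) = 7 then (1:ℤ) else -1) % 2 = (if ((0:Fin 8) : ℕ) = 7 then 1 else -1) % 2
    rw [fv0]
    by_cases h : (i:ℕ) = 7 <;> simp [h]
  · rw [Fin.sum_univ_eight]
    show ((if ((0:Fin 8):ℕ) = 7 then (1:ℤ) else -1) + (if ((1:Fin 8):ℕ) = 7 then 1 else -1) + (if ((2:Fin 8):ℕ) = 7 then 1 else -1) + (if ((3:Fin 8):ℕ) = 7 then 1 else -1) + (if ((4:Fin 8):ℕ) = 7 then 1 else -1) + (if ((5:Fin 8):ℕ) = 7 then 1 else -1) + (if ((6:Fin 8):ℕ) = 7 then 1 else -1) + (if ((7:Fin 8):ℕ) = 7 then 1 else -1)) % 4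
      = (2 * (if ((0:Fin 8):ℕ) = 7 then 1 else -1)) % 4
    rw [fv0, fv1, fv2, fv3, fv4, fv5, fv6, fv7]
    norm_num

lemma u8hat_inner : ⟪u8hat, u8hat⟫ = (1:ℝ) := by
  rw [E8inner_sum, Fin.sum_univ_eight]
  simp (config := { decide := true }) [u8hat]
  field_simp
  linear_combination (-4) * sqrt2_sq

theorem inner_u7hat_u8hat_neg (w : E8Space ≃ₗᵢ[ℝ] E8Space) (hw : w ∈ WeylE8)
    (hneg : ⟪u7hat, w u8hat⟫ < 0) :
    ⟪u7hat, w u8hat⟫ ∈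
      ({-(Real.sqrt 3 / 2), -(1 / Real.sqrt 3), -(1 / (2 * Real.sqrt 3))} : Set ℝ) := by
  have hcond := weyl_pres w hw u8hat u8hat_cond
  have hvv : ⟪w u8hat, w u8hat⟫ = (1:ℝ) := by
    rw [LinearIsometryEquiv.inner_map_map]; exact u8hat_inner
  revert hneg
  generalize w u8hat = v at hcond hvv ⊢
  intro hneg
  obtain ⟨x, hx, hpar, hsum⟩ := hcond
  have h8 : x 0^2 + x 1^2 + x 2^2 + x 3^2 + x 4^2 + x 5^2 + x 6^2 + x 7^2 = 8 := by
    have hR : (x 0:ℝ)^2 + (x 1:ℝ)^2 + (x 2:ℝ)^2 + (x 3:ℝ)^2 + (x 4:ℝ)^2 + (x 5:ℝ)^2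
        + (x 6:ℝ)^2 + (x 7:ℝ)^2 = 8 := by
      rw [E8inner_sum, Fin.sum_univ_eight] at hvv
      linear_combination (-(2*Real.sqrt 2*v 0 + (x 0:ℝ)))*hx 0
        + (-(2*Real.sqrt 2*v 1 + (x 1:ℝ)))*hx 1 + (-(2*Real.sqrt 2*v 2 + (x 2:ℝ)))*hx 2
        + (-(2*Real.sqrt 2*v 3 + (x 3:ℝ)))*hx 3 + (-(2*Real.sqrt 2*v 4 + (x 4:ℝ)))*hx 4
        + (-(2*Real.sqrt 2*v 5 + (x 5:ℝ)))*hx 5 + (-(2*Real.sqrt 2*v 6 + (x 6:ℝ)))*hx 6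
        + (-(2*Real.sqrt 2*v 7 + (x 7:ℝ)))*hx 7 + 8*hvv
        + (4*(v 0^2 + v 1^2 + v 2^2 + v 3^2 + v 4^2 + v 5^2 + v 6^2 + v 7^2))*sqrt2_sq
    exact_mod_cast hR
  set s : ℤ := x 0 + x 1 + x 2 + x 3 + x 4 + x 5 with hsdef
  have h12 : Real.sqrt 6 * Real.sqrt 2 = 2 * Real.sqrt 3 := by
    rw [← Real.sqrt_mul (by norm_num : (0:ℝ) ≤ 6)]
    rw [show (6*2:ℝ) = 2^2*3 by norm_num, Real.sqrt_mul (by positivity),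
      Real.sqrt_sq (by norm_num : (0:ℝ) ≤ 2)]
  have h6 : Real.sqrt 6 ≠ 0 := by positivity
  have key : (Real.sqrt 6)⁻¹ * Real.sqrt 6 = 1 := inv_mul_cancel₀ h6
  have hI : ⟪u7hat, v⟫ * Real.sqrt 6 = -(v 0 + v 1 + v 2 + v 3 + v 4 + v 5) := by
    rw [E8inner_sum, Fin.sum_univ_eight]
    have hu7 : ∀ i : Fin 8, u7hat i = (if (i : ℕ) < 6 then (-1:ℝ) else 0) / Real.sqrt 6 :=
      fun _ => rfl
    simp only [hu7, fv0, fv1, fv2, fv3, fv4, fv5, fv6, fv7]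
    norm_num
    linear_combination (-(v 0 + v 1 + v 2 + v 3 + v 4 + v 5)) * key
  have hsR : (s:ℝ) = (x 0:ℝ) + x 1 + x 2 + x 3 + x 4 + x 5 := by
    rw [hsdef]; push_cast; ring
  have hxsum : 2 * Real.sqrt 2 * (v 0 + v 1 + v 2 + v 3 + v 4 + v 5) = (s:ℝ) := by
    linear_combination hx 0 + hx 1 + hx 2 + hx 3 + hx 4 + hx 5 - hsR
  have hval : ⟪u7hat, v⟫ * (4 * Real.sqrt 3) = -(s:ℝ) := by
    calc ⟪u7hat, v⟫ * (4 * Real.sqrt 3) = ⟪u7hat, v⟫ * (2 * (2 * Real.sqrt 3)) := by ring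
    _ = ⟪u7hat, v⟫ * (2 * (Real.sqrt 6 * Real.sqrt 2)) := by rw [h12]
    _ = (⟪u7hat, v⟫ * Real.sqrt 6) * (2 * Real.sqrt 2) := by ring
    _ = -(v 0 + v 1 + v 2 + v 3 + v 4 + v 5) * (2 * Real.sqrt 2) := by rw [hI]
    _ = -(2 * Real.sqrt 2 * (v 0 + v 1 + v 2 + v 3 + v 4 + v 5)) := by ring
    _ = -(s:ℝ) := by rw [hxsum]
  have hspos : 0 < s := by
    have h1 : (-(s:ℝ)) < 0 := by
      rw [← hval]
      exact mul_neg_of_neg_of_pos hneg (by positivity)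
    have : (0:ℝ) < (s:ℝ) := by linarith
    exact_mod_cast this
  have hseven : s % 2 = 0 := by
    have h1 := hpar 1; have h2 := hpar 2; have h3 := hpar 3
    have h4 := hpar 4; have h5 := hpar 5
    omega
  have hs2 : s^2 ≤ 48 := by
    nlinarith [sq_nonneg (x 0 - x 1), sq_nonneg (x 0 - x 2), sq_nonneg (x 0 - x 3),
      sq_nonneg (x 0 - x 4), sq_nonneg (x 0 - x 5), sq_nonneg (x 1 - x 2),
      sq_nonneg (x 1 - x 3), sq_nonneg (x 1 - x 4), sq_nonneg (x 1 - x 5),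
      sq_nonneg (x 2 - x 3), sq_nonneg (x 2 - x 4), sq_nonneg (x 2 - x 5),
      sq_nonneg (x 3 - x 4), sq_nonneg (x 3 - x 5), sq_nonneg (x 4 - x 5),
      sq_nonneg (x 6), sq_nonneg (x 7), h8]
  have hsle : s ≤ 6 := by nlinarith [hs2, hspos]
  have hIv : ⟪u7hat, v⟫ = -(s:ℝ) / (4 * Real.sqrt 3) := by
    rw [eq_div_iff (by positivity : (4 * Real.sqrt 3) ≠ 0)]
    exact hval
  have hs : s = 2 ∨ s = 4 ∨ s = 6 := by omega
  simp only [Set.mem_insert_iff, Set.mem_singleton_iff]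
  have h43 : (4 * Real.sqrt 3) ≠ 0 := by positivity
  have key3 : (Real.sqrt 3)⁻¹ * Real.sqrt 3 = 1 := inv_mul_cancel₀ (by positivity)
  rcases hs with h | h | h
  · right; right
    rw [hIv, h, div_eq_iff h43]; push_cast
    linear_combination 2 * key3
  · right; left
    rw [hIv, h, div_eq_iff h43]; push_cast
    linear_combination 4 * key3
  · left
    rw [hIv, h, div_eq_iff h43]; push_cast
    linear_combination 2 * sqrt3_sq
end
end
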